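/- Minimal output entropy of a Pauli channel: let Λ(ρ) = Σ_{i=0}^{3} p_i σ_i ρ σ_i be the generalized depolarizing (Pauli) channel on 2×2 density matrices, where σ_0 = I, σ_1, σ_2, σ_3 are the Pauli matrices and (p_i) is a probability distribution. Then the minimum over all pure qubit states |ψ⟩ of S(Λ(|ψ⟩⟨ψ|)) equals H(λ), where λ is the sum of the two largest of the probabilities p_0, p_1, p_2, p_3 and H is the binary entropy function. Consequently the one-shot classical capacity is C_1(Λ) = 1 − min_ψ S(Λ(|ψ⟩⟨ψ|)) = 1 − H(1−λ). -/

import Mathlib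

noncomputable section
open scoped BigOperators Kronecker Matrix ComplexOrder
open Matrix

namespace QIT

def IsDensity {n : Type*} [Fintype n] [DecidableEq n] (ρ : Matrix n n ℂ) : Prop :=
  ρ.PosSemidef ∧ ρ.trace = 1

noncomputable def vN {n : Type*} [Fintype n] [DecidableEq n] (ρ : Matrix n n ℂ) : ℝ :=
  if h : ρ.IsHermitian then ∑ i, -(h.eigenvalues i * Real.logb 2 (h.eigenvalues i)) else 0

def proj {n : Type*} (ψ : n → ℂ) : Matrix n n ℂ :=
  Matrix.of fun x y => ψ x * (starRingEnd ℂ) (ψ y)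

def ptraceL {a b : Type*} [Fintype a] (ρ : Matrix (a × b) (a × b) ℂ) : Matrix b b ℂ :=
  Matrix.of fun i j => ∑ k, ρ (k, i) (k, j)

def ptraceR {a b : Type*} [Fintype b] (ρ : Matrix (a × b) (a × b) ℂ) : Matrix a a ℂ :=
  Matrix.of fun i j => ∑ k, ρ (i, k) (j, k)

noncomputable def ent {X Y : Type*} [Fintype X] [Fintype Y] [DecidableEq Y]
    (ψ : X × Y → ℂ) : ℝ :=
  vN (ptraceL (proj ψ))

def IsPurification {A B : Type*} [Fintype A] [Fintype B] {dA' dB' : ℕ}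
    (ρ : Matrix (A × B) (A × B) ℂ)
    (ψ : (A × Fin dA') × (B × Fin dB') → ℂ) : Prop :=
  (∑ x, ‖ψ x‖ ^ 2 = 1) ∧
  ∀ a b a' b', ρ (a, b) (a', b') =
    ∑ a2 : Fin dA', ∑ b2 : Fin dB',
      ψ ((a, a2), (b, b2)) * (starRingEnd ℂ) (ψ ((a', a2), (b', b2)))

noncomputable def Ep {A B : Type*} [Fintype A] [Fintype B] [DecidableEq A] [DecidableEq B]
    (ρ : Matrix (A × B) (A × B) ℂ) : ℝ :=
  sInf { e : ℝ | ∃ (dA' dB' : ℕ) (ψ : (A × Fin dA') × (B × Fin dB') → ℂ),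
    IsPurification ρ ψ ∧ e = ent ψ }

noncomputable def Iq {A B : Type*} [Fintype A] [Fintype B] [DecidableEq A] [DecidableEq B]
    (ρ : Matrix (A × B) (A × B) ℂ) : ℝ :=
  vN (ptraceR ρ) + vN (ptraceL ρ) - vN ρ

open Classical in
noncomputable def msqrt {n : Type*} [Fintype n] [DecidableEq n] (M : Matrix n n ℂ) : Matrix n n ℂ :=
  if h : M.PosSemidef then (h.1.eigenvectorUnitary : Matrix n n ℂ) *
    diagonal ((↑) ∘ (√·) ∘ h.1.eigenvalues) * (star h.1.eigenvectorUnitary : Matrix n n ℂ) else 0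

noncomputable def fid {n : Type*} [Fintype n] [DecidableEq n] (ρ σ : Matrix n n ℂ) : ℝ :=
  ((msqrt (msqrt ρ * σ * msqrt ρ)).trace).re

noncomputable def bures {n : Type*} [Fintype n] [DecidableEq n] (ρ σ : Matrix n n ℂ) : ℝ :=
  2 * Real.sqrt (1 - fid ρ σ)

noncomputable def traceNorm {n : Type*} [Fintype n] [DecidableEq n] (X : Matrix n n ℂ) : ℝ :=
  ((msqrt (Xᴴ * X)).trace).re

def IsPOVM {n : Type*} [Fintype n] [DecidableEq n] {k : ℕ} (M : Fin k → Matrix n n ℂ) : Prop :=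
  (∀ i, (M i).PosSemidef) ∧ ∑ i, M i = 1

noncomputable def shannon {k : Type*} [Fintype k] (p : k → ℝ) : ℝ :=
  ∑ i, -(p i * Real.logb 2 (p i))

noncomputable def miJoint {k l : Type*} [Fintype k] [Fintype l] (p : k × l → ℝ) : ℝ :=
  shannon (fun i => ∑ j, p (i, j)) + shannon (fun j => ∑ i, p (i, j)) - shannon p

noncomputable def Ic {A B : Type*} [Fintype A] [Fintype B] [DecidableEq A] [DecidableEq B]
    (ρ : Matrix (A × B) (A × B) ℂ) : ℝ :=
  sSup { e : ℝ | ∃ (k l : ℕ) (MA : Fin k → Matrix A A ℂ) (MB : Fin l → Matrix B B ℂ),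
    IsPOVM MA ∧ IsPOVM MB ∧
    e = miJoint (fun ij : Fin k × Fin l => (((MA ij.1 ⊗ₖ MB ij.2) * ρ).trace).re) }

noncomputable def probOf {A B : Type*} [Fintype A] [Fintype B] [DecidableEq A] [DecidableEq B]
    (M : Matrix A A ℂ) (ρ : Matrix (A × B) (A × B) ℂ) : ℝ :=
  (((M ⊗ₖ (1 : Matrix B B ℂ)) * ρ).trace).re

noncomputable def postB {A B : Type*} [Fintype A] [Fintype B] [DecidableEq A] [DecidableEq B]
    (M : Matrix A A ℂ) (ρ : Matrix (A × B) (A × B) ℂ) : Matrix B B ℂ :=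
  ((probOf M ρ : ℂ))⁻¹ • ptraceL ((M ⊗ₖ (1 : Matrix B B ℂ)) * ρ)

noncomputable def CA {A B : Type*} [Fintype A] [Fintype B] [DecidableEq A] [DecidableEq B]
    (ρ : Matrix (A × B) (A × B) ℂ) : ℝ :=
  sSup { c : ℝ | ∃ (k : ℕ) (M : Fin k → Matrix A A ℂ), IsPOVM M ∧
    c = vN (∑ i, (probOf (M i) ρ : ℂ) • postB (M i) ρ)
        - ∑ i, probOf (M i) ρ * vN (postB (M i) ρ) }

noncomputable def pauli : Fin 4 → Matrix (Fin 2) (Fin 2) ℂ :=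
  ![1, !![0, 1; 1, 0], !![0, -Complex.I; Complex.I, 0], !![1, 0; 0, -1]]

noncomputable def bell0 : Fin 2 × Fin 2 → ℂ :=
  fun x => if x.1 = x.2 then ((Real.sqrt 2)⁻¹ : ℝ) else 0

noncomputable def bell (i : Fin 4) : Fin 2 × Fin 2 → ℂ :=
  fun x => ∑ j, pauli i x.2 j * bell0 (x.1, j)

noncomputable def binEnt (x : ℝ) : ℝ :=
  -(x * Real.logb 2 x) - (1 - x) * Real.logb 2 (1 - x)

noncomputable def pauliChannel (p : Fin 4 → ℝ) (X : Matrix (Fin 2) (Fin 2) ℂ) :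
    Matrix (Fin 2) (Fin 2) ℂ :=
  ∑ i, (p i : ℂ) • (pauli i * X * pauli i)

noncomputable def holevoCap (Λ : Matrix (Fin 2) (Fin 2) ℂ → Matrix (Fin 2) (Fin 2) ℂ) : ℝ :=
  sSup { c : ℝ | ∃ (k : ℕ) (q : Fin k → ℝ) (ρs : Fin k → Matrix (Fin 2) (Fin 2) ℂ),
    (∀ i, 0 ≤ q i) ∧ (∑ i, q i = 1) ∧ (∀ i, IsDensity (ρs i)) ∧
    c = vN (∑ i, (q i : ℂ) • Λ (ρs i)) - ∑ i, q i * vN (Λ (ρs i)) }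


section Helpers

open Real

lemma binEnt_eq (x : ℝ) : binEnt x = Real.binEntropy x / Real.log 2 := by
  simp [binEnt, Real.binEntropy, Real.logb, Real.log_inv]
  ring

lemma binEnt_le_one (x : ℝ) : binEnt x ≤ 1 := by
  rw [binEnt_eq, div_le_one (Real.log_pos one_lt_two)]
  exact Real.binEntropy_le_log_two

lemma binEnt_symm (x : ℝ) : binEnt (1 - x) = binEnt x := by
  unfold binEnt
  rw [show (1:ℝ) - (1 - x) = x by ring]
  ring

lemma binEnt_anti {a b : ℝ} (ha : 1/2 ≤ a) (hab : a ≤ b) (hb : b ≤ 1) :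
    binEnt b ≤ binEnt a := by
  rw [binEnt_eq, binEnt_eq]
  gcongr
  exact Real.binEntropy_strictAntiOn.antitoneOn
    (Set.mem_Icc.2 ⟨by norm_num; linarith, hab.trans hb⟩)
    (Set.mem_Icc.2 ⟨by norm_num; linarith, hb⟩) hab

lemma binEnt_ge_of {l e : ℝ} (hl : 1/2 ≤ l) (hl1 : l ≤ 1) (he : 0 ≤ e) (he1 : e ≤ 1)
    (h : l * (1 - l) ≤ e * (1 - e)) : binEnt l ≤ binEnt e := by
  rcases le_or_gt (1/2) e with h2 | h2
  · exact binEnt_anti h2 (by nlinarith) hl1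
  · rw [← binEnt_symm e]
    exact binEnt_anti (by linarith) (by nlinarith) hl1

lemma herm_trace_eq {n : Type*} [Fintype n] [DecidableEq n] {A : Matrix n n ℂ}
    (hA : A.IsHermitian) : A.trace = ∑ i, (hA.eigenvalues i : ℂ) := by
  conv_lhs => rw [hA.spectral_theorem]
  rw [Unitary.conjStarAlgAut_apply, Matrix.trace_mul_cycle]
  have h1 : (star (hA.eigenvectorUnitary : Matrix n n ℂ)) * (hA.eigenvectorUnitary : Matrix n n ℂ) = 1 :=
    Matrix.mem_unitaryGroup_iff'.mp hA.eigenvectorUnitary.2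
  rw [h1, Matrix.one_mul, Matrix.trace_diagonal]
  rfl

lemma vN_two {ρ : Matrix (Fin 2) (Fin 2) ℂ} (hH : ρ.IsHermitian) (htr : ρ.trace = 1) :
    vN ρ = binEnt (hH.eigenvalues 0) ∧
      (hH.eigenvalues 0) * (1 - hH.eigenvalues 0) = ρ.det.re := by
  have hsum : hH.eigenvalues 0 + hH.eigenvalues 1 = 1 := by
    have := herm_trace_eq hH
    rw [htr, Fin.sum_univ_two] at this
    exact_mod_cast this.symm
  have hdet : ρ.det = ((hH.eigenvalues 0 * hH.eigenvalues 1 : ℝ) : ℂ) := by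
    rw [hH.det_eq_prod_eigenvalues, Fin.prod_univ_two]
    push_cast
    rfl
  constructor
  · rw [vN, dif_pos hH, Fin.sum_univ_two, binEnt,
      show hH.eigenvalues 1 = 1 - hH.eigenvalues 0 by linarith]
    ring
  · rw [hdet, Complex.ofReal_re, show (1:ℝ) - hH.eigenvalues 0 = hH.eigenvalues 1 by linarith]

lemma key_ineq (p0 p1 p2 p3 lam w x y : ℝ)
    (h01 : p0 + p1 ≤ lam) (h02 : p0 + p2 ≤ lam) (h03 : p0 + p3 ≤ lam)
    (h12 : p1 + p2 ≤ lam) (h13 : p1 + p3 ≤ lam) (h23 : p2 + p3 ≤ lam)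
    (hsum : p0 + p1 + p2 + p3 = 1)
    (hxy : x^2 + y^2 ≤ w * (1 - w)) :
    lam * (1 - lam) ≤
      ((p0 + p3) * w + (p1 + p2) * (1 - w)) * ((p1 + p2) * w + (p0 + p3) * (1 - w))
        - ((p0 + p1 - p2 - p3) * x)^2 - ((p0 - p1 + p2 - p3) * y)^2 := by
  have hp3 : p3 = 1 - p0 - p1 - p2 := by linarith
  subst hp3
  have hL0 : 0 ≤ 2 * lam - 1 := by linarith
  have h3 : (p0 + (1 - p0 - p1 - p2) - p1 - p2)^2 ≤ (2*lam-1)^2 := by nlinarith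
  have h1 : (p0 + p1 - p2 - (1 - p0 - p1 - p2))^2 ≤ (2*lam-1)^2 := by nlinarith
  have h2 : (p0 - p1 + p2 - (1 - p0 - p1 - p2))^2 ≤ (2*lam-1)^2 := by nlinarith
  have e3 := mul_le_mul_of_nonneg_right h3 (sq_nonneg (2*w-1))
  have e1 := mul_le_mul_of_nonneg_right h1 (sq_nonneg (2*x))
  have e2 := mul_le_mul_of_nonneg_right h2 (sq_nonneg (2*y))
  have hball : (2*w-1)^2 + (2*x)^2 + (2*y)^2 ≤ 1 := by nlinarith
  have hLsq : (2*lam-1)^2 * (2*w-1)^2 + (2*lam-1)^2 * (2*x)^2 + (2*lam-1)^2 * (2*y)^2 ≤ (2*lam-1)^2 := by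
    nlinarith [mul_le_mul_of_nonneg_left hball (sq_nonneg (2*lam-1))]
  have expand : ((p0 + (1 - p0 - p1 - p2)) * w + (p1 + p2) * (1 - w)) *
        ((p1 + p2) * w + (p0 + (1 - p0 - p1 - p2)) * (1 - w))
      - ((p0 + p1 - p2 - (1 - p0 - p1 - p2)) * x)^2
      - ((p0 - p1 + p2 - (1 - p0 - p1 - p2)) * y)^2 - lam * (1 - lam)
      = ((2*lam-1)^2 - ((p0 + (1 - p0 - p1 - p2) - p1 - p2)^2 * (2*w-1)^2
          + (p0 + p1 - p2 - (1 - p0 - p1 - p2))^2 * (2*x)^2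
          + (p0 - p1 + p2 - (1 - p0 - p1 - p2))^2 * (2*y)^2)) / 4 := by
    ring
  linarith [e1, e2, e3, hLsq, expand]

lemma pauli_herm (i : Fin 4) : (pauli i)ᴴ = pauli i := by
  fin_cases i <;> simp [pauli] <;>
    (ext a b; fin_cases a <;> fin_cases b <;> simp [Matrix.conjTranspose_apply])

lemma pauli_sq (i : Fin 4) : pauli i * pauli i = 1 := by
  fin_cases i <;> simp [pauli] <;>
    (ext a b; fin_cases a <;> fin_cases b <;>
      simp [Matrix.mul_apply, Fin.sum_univ_two, Matrix.one_apply])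

lemma channel_apply (p : Fin 4 → ℝ) (ρ : Matrix (Fin 2) (Fin 2) ℂ) :
    pauliChannel p ρ =
      !![((p 0 + p 3 : ℝ) : ℂ) * ρ 0 0 + ((p 1 + p 2 : ℝ) : ℂ) * ρ 1 1,
         ((p 0 - p 3 : ℝ) : ℂ) * ρ 0 1 + ((p 1 - p 2 : ℝ) : ℂ) * ρ 1 0;
         ((p 0 - p 3 : ℝ) : ℂ) * ρ 1 0 + ((p 1 - p 2 : ℝ) : ℂ) * ρ 0 1,
         ((p 1 + p 2 : ℝ) : ℂ) * ρ 0 0 + ((p 0 + p 3 : ℝ) : ℂ) * ρ 1 1] := by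
  ext a b
  fin_cases a <;> fin_cases b <;>
    simp [pauliChannel, pauli, Fin.sum_univ_four, Matrix.sum_apply, Matrix.mul_apply,
      Fin.sum_univ_two, Matrix.one_apply] <;> ring_nf <;>
    simp [Complex.I_sq] <;> ring

lemma channel_herm {p : Fin 4 → ℝ} {ρ : Matrix (Fin 2) (Fin 2) ℂ} (hH : ρ.IsHermitian) :
    (pauliChannel p ρ).IsHermitian := by
  unfold Matrix.IsHermitian pauliChannel
  rw [Matrix.conjTranspose_sum]
  refine Finset.sum_congr rfl fun i _ => ?_
  rw [Matrix.conjTranspose_smul, Matrix.conjTranspose_mul, Matrix.conjTranspose_mul,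
    pauli_herm, hH.eq, Matrix.mul_assoc]
  simp [Complex.star_def, Complex.conj_ofReal]

lemma channel_trace {p : Fin 4 → ℝ} (hsum : ∑ i, p i = 1) {ρ : Matrix (Fin 2) (Fin 2) ℂ}
    (htr : ρ.trace = 1) : (pauliChannel p ρ).trace = 1 := by
  unfold pauliChannel
  rw [Matrix.trace_sum]
  have : ∀ i : Fin 4, ((p i : ℂ) • (pauli i * ρ * pauli i)).trace = (p i : ℂ) := by
    intro i
    rw [Matrix.trace_smul, Matrix.trace_mul_cycle, pauli_sq, Matrix.one_mul, htr]
    simp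
  rw [Finset.sum_congr rfl fun i _ => this i, ← Complex.ofReal_sum, hsum, Complex.ofReal_one]

lemma psd_smul {n : Type*} [Fintype n] [DecidableEq n] {M : Matrix n n ℂ}
    (hM : M.PosSemidef) {c : ℝ} (hc : 0 ≤ c) : ((c : ℂ) • M).PosSemidef := by
  refine Matrix.PosSemidef.of_dotProduct_mulVec_nonneg ?_ fun x => ?_
  · show ((c:ℂ) • M)ᴴ = (c:ℂ) • M
    rw [Matrix.conjTranspose_smul, hM.1.eq]
    simp [Complex.star_def, Complex.conj_ofReal]
  · rw [Matrix.smul_mulVec, dotProduct_smul]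
    exact mul_nonneg (by exact_mod_cast Complex.zero_le_real.2 hc) (hM.dotProduct_mulVec_nonneg x)

lemma channel_psd {p : Fin 4 → ℝ} (hp : ∀ i, 0 ≤ p i) {ρ : Matrix (Fin 2) (Fin 2) ℂ}
    (hρ : ρ.PosSemidef) : (pauliChannel p ρ).PosSemidef := by
  unfold pauliChannel
  refine Finset.sum_induction (fun i => (p i : ℂ) • (pauli i * ρ * pauli i))
    Matrix.PosSemidef (fun A B hA hB => hA.add hB) Matrix.PosSemidef.zero (fun i _ => ?_)
  refine psd_smul ?_ (hp i)
  have := hρ.conjTranspose_mul_mul_same (pauli i)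
  rwa [pauli_herm] at this

lemma psd_diag_re_nonneg {M : Matrix (Fin 2) (Fin 2) ℂ} (hM : M.PosSemidef) (i : Fin 2) :
    0 ≤ (M i i).re := by
  have := hM.diag_nonneg (i := i)
  exact (Complex.nonneg_iff.1 this).1

lemma psd_det_re_nonneg {M : Matrix (Fin 2) (Fin 2) ℂ} (hM : M.PosSemidef) :
    0 ≤ M.det.re := by
  have h0 := hM.eigenvalues_nonneg 0
  have h1 := hM.eigenvalues_nonneg 1
  have hdet : M.det = ((hM.1.eigenvalues 0 * hM.1.eigenvalues 1 : ℝ) : ℂ) := by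
    rw [hM.1.det_eq_prod_eigenvalues, Fin.prod_univ_two]
    push_cast
    rfl
  rw [hdet, Complex.ofReal_re]
  exact mul_nonneg h0 h1

end Helpers

section Main

lemma lam_bounds {p : Fin 4 → ℝ} (hp : ∀ i, 0 ≤ p i) (hsum : ∑ i, p i = 1)
    {lam : ℝ} (hlam : IsGreatest {x : ℝ | ∃ i j : Fin 4, i ≠ j ∧ x = p i + p j} lam) :
    1/2 ≤ lam ∧ lam ≤ 1 := by
  have hsum4 : p 0 + p 1 + p 2 + p 3 = 1 := by
    rw [← hsum, Fin.sum_univ_four]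
  have h01 : p 0 + p 1 ≤ lam := hlam.2 ⟨0, 1, by decide, rfl⟩
  have h23 : p 2 + p 3 ≤ lam := hlam.2 ⟨2, 3, by decide, rfl⟩
  obtain ⟨i, j, hij, heq⟩ := hlam.1
  have hle : lam ≤ 1 := by
    rw [heq]
    fin_cases i <;> fin_cases j <;> simp_all <;>
      linarith [hp 0, hp 1, hp 2, hp 3]
  exact ⟨by linarith, hle⟩

lemma vN_channel_ge (p : Fin 4 → ℝ) (hp : ∀ i, 0 ≤ p i) (hsum : ∑ i, p i = 1)
    (lam : ℝ) (hlam : IsGreatest {x : ℝ | ∃ i j : Fin 4, i ≠ j ∧ x = p i + p j} lam)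
    (ρ : Matrix (Fin 2) (Fin 2) ℂ) (hρ : ρ.PosSemidef) (htr : ρ.trace = 1) :
    binEnt lam ≤ vN (pauliChannel p ρ) := by
  obtain ⟨hl2, hl1⟩ := lam_bounds hp hsum hlam
  have hsum4 : p 0 + p 1 + p 2 + p 3 = 1 := by rw [← hsum, Fin.sum_univ_four]
  have hH := hρ.1
  -- real entries
  set w := (ρ 0 0).re with hw
  set d := (ρ 1 1).re with hd
  set x := (ρ 0 1).re with hx
  set y := (ρ 0 1).im with hy
  have h00 : ρ 0 0 = (w : ℂ) := by
    have := hH.apply 0 0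
    exact (Complex.conj_eq_iff_re.1 this).symm
  have h11 : ρ 1 1 = (d : ℂ) := by
    have := hH.apply 1 1
    exact (Complex.conj_eq_iff_re.1 this).symm
  have h01' : ρ 0 1 = (x : ℂ) + (y : ℂ) * Complex.I := (Complex.re_add_im _).symm
  have h10 : ρ 1 0 = (x : ℂ) - (y : ℂ) * Complex.I := by
    have h2 : ρ 1 0 = star (ρ 0 1) := by rw [← hH.apply 0 1, star_star]
    rw [h2, h01']
    simp [Complex.ext_iff]
  have htrwd : w + d = 1 := by
    have : ρ.trace = ((w + d : ℝ) : ℂ) := by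
      rw [Matrix.trace_fin_two, h00, h11]; push_cast; ring
    rw [htr] at this
    exact_mod_cast this.symm
  have hdetρ : ρ.det = ((w * d - x^2 - y^2 : ℝ) : ℂ) := by
    rw [Matrix.det_fin_two, h00, h11, h01', h10]
    push_cast
    ring_nf
    simp [Complex.I_sq]
    ring
  have hdet0 : 0 ≤ w * d - x^2 - y^2 := by
    have := psd_det_re_nonneg hρ
    rwa [hdetρ, Complex.ofReal_re] at this
  have hdetC : (pauliChannel p ρ).det =
      ((((p 0 + p 3) * w + (p 1 + p 2) * d) * ((p 1 + p 2) * w + (p 0 + p 3) * d)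
        - ((p 0 + p 1 - p 2 - p 3) * x)^2 - ((p 0 - p 1 + p 2 - p 3) * y)^2 : ℝ) : ℂ) := by
    rw [channel_apply, Matrix.det_fin_two_of, h00, h11, h01', h10]
    push_cast
    ring_nf
    simp [Complex.I_sq]
    ring
  have hH' := channel_herm (p := p) hH
  have htr' := channel_trace hsum htr
  obtain ⟨hvN, hev⟩ := vN_two hH' htr'
  have hpsd' := channel_psd hp hρ
  have he0 : 0 ≤ hH'.eigenvalues 0 := hpsd'.eigenvalues_nonneg 0
  have he1 : 0 ≤ hH'.eigenvalues 1 := hpsd'.eigenvalues_nonneg 1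
  have hsum01 : hH'.eigenvalues 0 + hH'.eigenvalues 1 = 1 := by
    have := herm_trace_eq hH'
    rw [htr', Fin.sum_univ_two] at this
    exact_mod_cast this.symm
  have hkey : lam * (1 - lam) ≤ (pauliChannel p ρ).det.re := by
    rw [hdetC, Complex.ofReal_re]
    rw [show d = 1 - w by linarith]
    apply key_ineq (p 0) (p 1) (p 2) (p 3) lam w x y
      (hlam.2 ⟨0, 1, by decide, rfl⟩) (hlam.2 ⟨0, 2, by decide, rfl⟩)
      (hlam.2 ⟨0, 3, by decide, rfl⟩) (hlam.2 ⟨1, 2, by decide, rfl⟩)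
      (hlam.2 ⟨1, 3, by decide, rfl⟩) (hlam.2 ⟨2, 3, by decide, rfl⟩)
      hsum4 (by rw [show d = 1 - w by linarith] at hdet0; linarith)
  rw [hvN]
  exact binEnt_ge_of hl2 hl1 he0 (by linarith) (hev ▸ hkey)

end Main

section Achieve

lemma vN_of_det {ρ : Matrix (Fin 2) (Fin 2) ℂ} (hH : ρ.IsHermitian) (htr : ρ.trace = 1)
    {s : ℝ} (hs : 0 ≤ s) (hdet : ρ.det.re = (1 - s^2)/4) :
    vN ρ = binEnt ((1+s)/2) := by
  obtain ⟨hvN, hev⟩ := vN_two hH htr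
  rw [hdet] at hev
  have h : (2 * hH.eigenvalues 0 - 1)^2 = s^2 := by nlinarith
  have habs : |2 * hH.eigenvalues 0 - 1| = s := by
    rw [← Real.sqrt_sq_eq_abs, h, Real.sqrt_sq hs]
  rcases (abs_eq hs).mp habs with h1 | h1
  · rw [hvN, show hH.eigenvalues 0 = (1+s)/2 by linarith]
  · rw [hvN, show hH.eigenvalues 0 = (1-s)/2 by linarith,
      show (1-s)/2 = 1 - (1+s)/2 by ring, binEnt_symm]

lemma binEnt_half : binEnt (1/2 : ℝ) = 1 := by
  have : Real.logb 2 (1/2 : ℝ) = -1 := by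
    rw [show (1/2 : ℝ) = 2⁻¹ by norm_num, Real.logb_inv, Real.logb_self_eq_one] <;> norm_num
  rw [binEnt, show (1:ℝ) - 1/2 = 1/2 by norm_num, this]
  norm_num

lemma psd_proj (ψ : Fin 2 → ℂ) : (proj ψ).PosSemidef := by
  refine Matrix.PosSemidef.of_dotProduct_mulVec_nonneg ?_ fun x => ?_
  · show (proj ψ)ᴴ = proj ψ
    ext i j
    simp [proj, Matrix.conjTranspose_apply, mul_comm]
  · have hz : dotProduct (star x) (proj ψ *ᵥ x) =
        (starRingEnd ℂ (∑ j, starRingEnd ℂ (ψ j) * x j)) * (∑ j, starRingEnd ℂ (ψ j) * x j) := by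
      simp only [dotProduct, Matrix.mulVec, Pi.star_apply, proj, Matrix.of_apply,
        map_sum (starRingEnd ℂ)]
      rw [Finset.sum_mul_sum]
      simp only [Finset.mul_sum]
      refine Finset.sum_congr rfl fun i _ => Finset.sum_congr rfl fun j _ => ?_
      simp only [map_mul (starRingEnd ℂ), RingHomCompTriple.comp_apply, RingHom.id_apply,
        starRingEnd_self_apply, Complex.star_def]
      ring
    rw [hz, mul_comm, Complex.mul_conj]
    exact_mod_cast Complex.zero_le_real.2 (Complex.normSq_nonneg _)

lemma trace_proj (ψ : Fin 2 → ℂ) (h : ∑ x, ‖ψ x‖ ^ 2 = 1) : (proj ψ).trace = 1 := by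
  have h2 : ‖ψ 0‖ ^ 2 + ‖ψ 1‖ ^ 2 = 1 := by rwa [Fin.sum_univ_two] at h
  have hn : ∀ z : ℂ, Complex.normSq z = ‖z‖ ^ 2 := fun z => by
    rw [Complex.normSq_eq_norm_sq]
  simp only [Matrix.trace_fin_two, proj, Matrix.of_apply]
  rw [Complex.mul_conj, Complex.mul_conj, ← Complex.ofReal_add, hn, hn, h2, Complex.ofReal_one]

lemma channel_linear (p : Fin 4 → ℝ) (ρ σ : Matrix (Fin 2) (Fin 2) ℂ) (a b : ℂ) :
    pauliChannel p (a • ρ + b • σ) = a • pauliChannel p ρ + b • pauliChannel p σ := by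
  rw [channel_apply, channel_apply, channel_apply]
  ext i j
  fin_cases i <;> fin_cases j <;>
    simp [Matrix.add_apply, Matrix.smul_apply] <;> ring

end Achieve

section Pairs

lemma vN_channel_eq {p : Fin 4 → ℝ} (hsum : ∑ i, p i = 1) {lam : ℝ} (hl2 : 1/2 ≤ lam)
    {φ : Fin 2 → ℂ} (hn : ∑ x, ‖φ x‖ ^ 2 = 1)
    (hdet : (pauliChannel p (proj φ)).det.re = (1 - (2*lam-1)^2)/4) :
    vN (pauliChannel p (proj φ)) = binEnt lam := by
  have := vN_of_det (channel_herm (psd_proj φ).1) (channel_trace hsum (trace_proj φ hn))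
    (s := 2*lam-1) (by linarith) hdet
  rwa [show (1+(2*lam-1))/2 = lam by ring] at this

lemma hcc : (((Real.sqrt 2 : ℝ) : ℂ))⁻¹ * (((Real.sqrt 2 : ℝ) : ℂ))⁻¹ = 1/2 := by
  rw [← mul_inv, ← Complex.ofReal_mul, Real.mul_self_sqrt (by norm_num)]
  norm_num

lemma conj_invsq2 : (starRingEnd ℂ) (((Real.sqrt 2 : ℝ) : ℂ))⁻¹ = (((Real.sqrt 2 : ℝ) : ℂ))⁻¹ := by
  rw [map_inv₀, Complex.conj_ofReal]

lemma norm_invsq2 : ‖(((Real.sqrt 2 : ℝ) : ℂ))⁻¹‖ ^ 2 = 1/2 := by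
  rw [norm_inv, Complex.norm_real, Real.norm_eq_abs, abs_of_nonneg (Real.sqrt_nonneg 2),
    inv_pow, Real.sq_sqrt (by norm_num)]
  norm_num

lemma pair3 (p : Fin 4 → ℝ) (hsum : ∑ i, p i = 1) (lam : ℝ) (hl2 : 1/2 ≤ lam)
    (hT : (p 0 + p 3 - p 1 - p 2)^2 = (2*lam-1)^2) :
    ∃ φ φ' : Fin 2 → ℂ, (∑ x, ‖φ x‖ ^ 2 = 1) ∧ (∑ x, ‖φ' x‖ ^ 2 = 1) ∧
      vN (pauliChannel p (proj φ)) = binEnt lam ∧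
      vN (pauliChannel p (proj φ')) = binEnt lam ∧ proj φ + proj φ' = 1 := by
  have hsum4 : p 0 + p 1 + p 2 + p 3 = 1 := by rw [← hsum, Fin.sum_univ_four]
  refine ⟨![1, 0], ![0, 1], by simp [Fin.sum_univ_two], by simp [Fin.sum_univ_two], ?_, ?_, ?_⟩
  · apply vN_channel_eq hsum hl2 (by simp [Fin.sum_univ_two])
    have e00 : proj ![1, 0] 0 0 = 1 := by simp [proj]
    have e01 : proj ![1, 0] 0 1 = 0 := by simp [proj]
    have e10 : proj ![1, 0] 1 0 = 0 := by simp [proj]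
    have e11 : proj ![1, 0] 1 1 = 0 := by simp [proj]
    have hd : (pauliChannel p (proj ![1, 0])).det = (((p 0 + p 3) * (p 1 + p 2) : ℝ) : ℂ) := by
      rw [channel_apply, Matrix.det_fin_two_of, e00, e01, e10, e11]
      push_cast
      ring
    rw [hd, Complex.ofReal_re]
    linear_combination (-(1:ℝ)/4) * hT + ((p 0 + p 1 + p 2 + p 3 + 1)/4) * hsum4
  · apply vN_channel_eq hsum hl2 (by simp [Fin.sum_univ_two])
    have e00 : proj ![0, 1] 0 0 = 0 := by simp [proj]
    have e01 : proj ![0, 1] 0 1 = 0 := by simp [proj]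
    have e10 : proj ![0, 1] 1 0 = 0 := by simp [proj]
    have e11 : proj ![0, 1] 1 1 = 1 := by simp [proj]
    have hd : (pauliChannel p (proj ![0, 1])).det = (((p 0 + p 3) * (p 1 + p 2) : ℝ) : ℂ) := by
      rw [channel_apply, Matrix.det_fin_two_of, e00, e01, e10, e11]
      push_cast
      ring
    rw [hd, Complex.ofReal_re]
    linear_combination (-(1:ℝ)/4) * hT + ((p 0 + p 1 + p 2 + p 3 + 1)/4) * hsum4
  · ext i j
    fin_cases i <;> fin_cases j <;> simp [proj, Matrix.one_apply]

lemma pair1 (p : Fin 4 → ℝ) (hsum : ∑ i, p i = 1) (lam : ℝ) (hl2 : 1/2 ≤ lam)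
    (hT : (p 0 + p 1 - p 2 - p 3)^2 = (2*lam-1)^2) :
    ∃ φ φ' : Fin 2 → ℂ, (∑ x, ‖φ x‖ ^ 2 = 1) ∧ (∑ x, ‖φ' x‖ ^ 2 = 1) ∧
      vN (pauliChannel p (proj φ)) = binEnt lam ∧
      vN (pauliChannel p (proj φ')) = binEnt lam ∧ proj φ + proj φ' = 1 := by
  have hsum4 : p 0 + p 1 + p 2 + p 3 = 1 := by rw [← hsum, Fin.sum_univ_four]
  set c : ℂ := (((Real.sqrt 2 : ℝ) : ℂ))⁻¹ with hc
  have hnrm : ∑ x : Fin 2, ‖(![c, c]) x‖ ^ 2 = 1 := by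
    rw [Fin.sum_univ_two]
    simp only [Matrix.cons_val_zero, Matrix.cons_val_one, Matrix.head_cons, hc, norm_invsq2]
    norm_num
  have hnrm' : ∑ x : Fin 2, ‖(![c, -c]) x‖ ^ 2 = 1 := by
    rw [Fin.sum_univ_two]
    simp only [Matrix.cons_val_zero, Matrix.cons_val_one, Matrix.head_cons, norm_neg, hc,
      norm_invsq2]
    norm_num
  refine ⟨![c, c], ![c, -c], hnrm, hnrm', ?_, ?_, ?_⟩
  · apply vN_channel_eq hsum hl2 hnrm
    have e00 : proj ![c, c] 0 0 = 1/2 := by simp [proj, hc, conj_invsq2, hcc]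
    have e01 : proj ![c, c] 0 1 = 1/2 := by simp [proj, hc, conj_invsq2, hcc]
    have e10 : proj ![c, c] 1 0 = 1/2 := by simp [proj, hc, conj_invsq2, hcc]
    have e11 : proj ![c, c] 1 1 = 1/2 := by simp [proj, hc, conj_invsq2, hcc]
    have hd : (pauliChannel p (proj ![c, c])).det =
        ((((p 0 + p 1 + p 2 + p 3)^2 - (p 0 + p 1 - p 2 - p 3)^2)/4 : ℝ) : ℂ) := by
      rw [channel_apply, Matrix.det_fin_two_of, e00, e01, e10, e11]
      push_cast
      ring
    rw [hd, Complex.ofReal_re]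
    linear_combination (-(1:ℝ)/4) * hT + ((p 0 + p 1 + p 2 + p 3 + 1)/4) * hsum4
  · apply vN_channel_eq hsum hl2 hnrm'
    have e00 : proj ![c, -c] 0 0 = 1/2 := by simp [proj, hc, conj_invsq2, hcc]
    have e01 : proj ![c, -c] 0 1 = -(1/2) := by
      simp [proj, hc, conj_invsq2]
      rw [hcc]; norm_num
    have e10 : proj ![c, -c] 1 0 = -(1/2) := by
      simp [proj, hc, conj_invsq2]
      rw [hcc]; norm_num
    have e11 : proj ![c, -c] 1 1 = 1/2 := by
      simp [proj, hc, conj_invsq2]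
      rw [hcc]
      norm_num
    have hd : (pauliChannel p (proj ![c, -c])).det =
        ((((p 0 + p 1 + p 2 + p 3)^2 - (p 0 + p 1 - p 2 - p 3)^2)/4 : ℝ) : ℂ) := by
      rw [channel_apply, Matrix.det_fin_two_of, e00, e01, e10, e11]
      push_cast
      ring
    rw [hd, Complex.ofReal_re]
    linear_combination (-(1:ℝ)/4) * hT + ((p 0 + p 1 + p 2 + p 3 + 1)/4) * hsum4
  · ext i j
    fin_cases i <;> fin_cases j <;>
      simp [proj, Matrix.one_apply, hc, conj_invsq2, Fin.mk_zero, Fin.mk_one] <;>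
      (try rw [hcc]) <;> norm_num

lemma pair2 (p : Fin 4 → ℝ) (hsum : ∑ i, p i = 1) (lam : ℝ) (hl2 : 1/2 ≤ lam)
    (hT : (p 0 - p 1 + p 2 - p 3)^2 = (2*lam-1)^2) :
    ∃ φ φ' : Fin 2 → ℂ, (∑ x, ‖φ x‖ ^ 2 = 1) ∧ (∑ x, ‖φ' x‖ ^ 2 = 1) ∧
      vN (pauliChannel p (proj φ)) = binEnt lam ∧
      vN (pauliChannel p (proj φ')) = binEnt lam ∧ proj φ + proj φ' = 1 := by
  have hsum4 : p 0 + p 1 + p 2 + p 3 = 1 := by rw [← hsum, Fin.sum_univ_four]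
  set c : ℂ := (((Real.sqrt 2 : ℝ) : ℂ))⁻¹ with hc
  have hnI : ‖c * Complex.I‖ ^ 2 = 1/2 := by
    rw [norm_mul, Complex.norm_I, mul_one, hc, norm_invsq2]
  have hnrm : ∑ x : Fin 2, ‖(![c, c * Complex.I]) x‖ ^ 2 = 1 := by
    rw [Fin.sum_univ_two]
    simp only [Matrix.cons_val_zero, Matrix.cons_val_one, Matrix.head_cons, hnI, hc, norm_invsq2]
    norm_num
  have hnrm' : ∑ x : Fin 2, ‖(![c, -(c * Complex.I)]) x‖ ^ 2 = 1 := by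
    rw [Fin.sum_univ_two]
    simp only [Matrix.cons_val_zero, Matrix.cons_val_one, Matrix.head_cons, norm_neg, hnI, hc,
      norm_invsq2]
    norm_num
  have hconjI : (starRingEnd ℂ) (c * Complex.I) = -(c * Complex.I) := by
    rw [_root_.map_mul, Complex.conj_I, hc, conj_invsq2]
    ring
  have hcI : (c * Complex.I) * -(c * Complex.I) = 1/2 := by
    have : (c * Complex.I) * -(c * Complex.I) = c * c * (-(Complex.I * Complex.I)) := by ring
    rw [this, Complex.I_mul_I, hc, hcc]
    norm_num
  refine ⟨![c, c * Complex.I], ![c, -(c * Complex.I)], hnrm, hnrm', ?_, ?_, ?_⟩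
  · apply vN_channel_eq hsum hl2 hnrm
    have e00 : proj ![c, c * Complex.I] 0 0 = 1/2 := by simp [proj, hc, conj_invsq2, hcc]
    have e01 : proj ![c, c * Complex.I] 0 1 = -(Complex.I/2) := by
      simp only [proj, Matrix.of_apply, Matrix.cons_val_zero, Matrix.cons_val_one,
        Matrix.head_cons, hconjI]
      rw [show c * -(c * Complex.I) = c * c * -Complex.I by ring, hc, hcc]
      ring
    have e10 : proj ![c, c * Complex.I] 1 0 = Complex.I/2 := by
      simp only [proj, Matrix.of_apply, Matrix.cons_val_zero, Matrix.cons_val_one,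
        Matrix.head_cons, hc, conj_invsq2]
      rw [show c * Complex.I * c = c * c * Complex.I by ring, hc, hcc]
      ring
    have e11 : proj ![c, c * Complex.I] 1 1 = 1/2 := by
      simp only [proj, Matrix.of_apply, Matrix.cons_val_one, Matrix.head_cons, Matrix.cons_val_zero,
        hconjI]
      rw [hcI]
    have hd : (pauliChannel p (proj ![c, c * Complex.I])).det =
        ((((p 0 + p 1 + p 2 + p 3)^2 - (p 0 - p 1 + p 2 - p 3)^2)/4 : ℝ) : ℂ) := by
      rw [channel_apply, Matrix.det_fin_two_of, e00, e01, e10, e11]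
      push_cast
      ring_nf
      rw [Complex.I_sq]
      ring
    rw [hd, Complex.ofReal_re]
    linear_combination (-(1:ℝ)/4) * hT + ((p 0 + p 1 + p 2 + p 3 + 1)/4) * hsum4
  · apply vN_channel_eq hsum hl2 hnrm'
    have e00 : proj ![c, -(c * Complex.I)] 0 0 = 1/2 := by simp [proj, hc, conj_invsq2, hcc]
    have e01 : proj ![c, -(c * Complex.I)] 0 1 = Complex.I/2 := by
      simp only [proj, Matrix.of_apply, Matrix.cons_val_zero, Matrix.cons_val_one,
        Matrix.head_cons, map_neg, hconjI, neg_neg]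
      rw [show c * (c * Complex.I) = c * c * Complex.I by ring, hc, hcc]
      ring
    have e10 : proj ![c, -(c * Complex.I)] 1 0 = -(Complex.I/2) := by
      simp only [proj, Matrix.of_apply, Matrix.cons_val_zero, Matrix.cons_val_one,
        Matrix.head_cons, hc, conj_invsq2, neg_mul]
      rw [show c * Complex.I * c = c * c * Complex.I by ring, hc, hcc]
      ring
    have e11 : proj ![c, -(c * Complex.I)] 1 1 = 1/2 := by
      simp only [proj, Matrix.of_apply, Matrix.cons_val_one, Matrix.head_cons, Matrix.cons_val_zero,
        map_neg, hconjI, neg_neg]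
      rw [show -(c * Complex.I) * (c * Complex.I) = (c * Complex.I) * -(c * Complex.I) by ring,
        hcI]
    have hd : (pauliChannel p (proj ![c, -(c * Complex.I)])).det =
        ((((p 0 + p 1 + p 2 + p 3)^2 - (p 0 - p 1 + p 2 - p 3)^2)/4 : ℝ) : ℂ) := by
      rw [channel_apply, Matrix.det_fin_two_of, e00, e01, e10, e11]
      push_cast
      ring_nf
      rw [Complex.I_sq]
      ring
    rw [hd, Complex.ofReal_re]
    linear_combination (-(1:ℝ)/4) * hT + ((p 0 + p 1 + p 2 + p 3 + 1)/4) * hsum4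
  · ext i j
    fin_cases i <;> fin_cases j <;>
      simp only [Fin.mk_zero, Fin.mk_one, Matrix.add_apply, proj, Matrix.of_apply,
        Matrix.cons_val_zero, Matrix.cons_val_one, Matrix.head_cons, Matrix.one_apply,
        Matrix.cons_val', Matrix.empty_val', Matrix.cons_val_fin_one, map_neg, hconjI,
        mul_neg, neg_mul, neg_neg]
    · rw [hc, conj_invsq2, hcc]; norm_num
    · simp
    · simp
    · rw [show -(c * Complex.I * (c * Complex.I)) + -(c * Complex.I * (c * Complex.I)) =
        c * c * (-(Complex.I * Complex.I)) * 2 by ring, Complex.I_mul_I, hc, hcc]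
      norm_num

lemma good_pair (p : Fin 4 → ℝ) (hp : ∀ i, 0 ≤ p i) (hsum : ∑ i, p i = 1)
    (lam : ℝ) (hlam : IsGreatest {x : ℝ | ∃ i j : Fin 4, i ≠ j ∧ x = p i + p j} lam) :
    ∃ φ φ' : Fin 2 → ℂ, (∑ x, ‖φ x‖ ^ 2 = 1) ∧ (∑ x, ‖φ' x‖ ^ 2 = 1) ∧
      vN (pauliChannel p (proj φ)) = binEnt lam ∧
      vN (pauliChannel p (proj φ')) = binEnt lam ∧ proj φ + proj φ' = 1 := by
  have hl2 := (lam_bounds hp hsum hlam).1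
  have hsum4 : p 0 + p 1 + p 2 + p 3 = 1 := by rw [← hsum, Fin.sum_univ_four]
  have hT : (p 0 + p 1 - p 2 - p 3)^2 = (2*lam-1)^2 ∨
      (p 0 - p 1 + p 2 - p 3)^2 = (2*lam-1)^2 ∨
      (p 0 + p 3 - p 1 - p 2)^2 = (2*lam-1)^2 := by
    obtain ⟨i, j, hij, heq⟩ := hlam.1
    fin_cases i <;> fin_cases j <;> (try norm_num at heq) <;>
      (try simp only [show (⟨2, by omega⟩ : Fin 4) = 2 from rfl,
        show (⟨3, by omega⟩ : Fin 4) = 3 from rfl] at heq) <;>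
      first
        | exact absurd rfl hij
        | (left; rw [show p 0 + p 1 - p 2 - p 3 = 2*lam-1 from by linarith])
        | (left; rw [show p 0 + p 1 - p 2 - p 3 = -(2*lam-1) from by linarith, neg_sq])
        | (right; left; rw [show p 0 - p 1 + p 2 - p 3 = 2*lam-1 from by linarith])
        | (right; left; rw [show p 0 - p 1 + p 2 - p 3 = -(2*lam-1) from by linarith, neg_sq])
        | (right; right; rw [show p 0 + p 3 - p 1 - p 2 = 2*lam-1 from by linarith])
        | (right; right; rw [show p 0 + p 3 - p 1 - p 2 = -(2*lam-1) from by linarith, neg_sq])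
  rcases hT with h | h | h
  · exact pair1 p hsum lam hl2 h
  · exact pair2 p hsum lam hl2 h
  · exact pair3 p hsum lam hl2 h

end Pairs

section Holevo

lemma holevo_mem (p : Fin 4 → ℝ) (hp : ∀ i, 0 ≤ p i) (hsum : ∑ i, p i = 1)
    (lam : ℝ) (hlam : IsGreatest {x : ℝ | ∃ i j : Fin 4, i ≠ j ∧ x = p i + p j} lam) :
    (1 - binEnt lam) ∈ { c : ℝ | ∃ (k : ℕ) (q : Fin k → ℝ) (ρs : Fin k → Matrix (Fin 2) (Fin 2) ℂ),
      (∀ i, 0 ≤ q i) ∧ (∑ i, q i = 1) ∧ (∀ i, IsDensity (ρs i)) ∧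
      c = vN (∑ i, (q i : ℂ) • pauliChannel p (ρs i))
          - ∑ i, q i * vN (pauliChannel p (ρs i)) } := by
  obtain ⟨φ, φ', hn, hn', hv, hv', hadd⟩ := good_pair p hp hsum lam hlam
  refine ⟨2, ![1/2, 1/2], ![proj φ, proj φ'], ?_, ?_, ?_, ?_⟩
  · intro i; fin_cases i <;> norm_num
  · rw [Fin.sum_univ_two]; norm_num
  · intro i
    fin_cases i
    · exact ⟨psd_proj φ, trace_proj φ hn⟩
    · exact ⟨psd_proj φ', trace_proj φ' hn'⟩
  · have hmix : (∑ i : Fin 2, ((![1/2, 1/2] : Fin 2 → ℝ) i : ℂ) •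
        pauliChannel p ((![proj φ, proj φ'] : Fin 2 → Matrix (Fin 2) (Fin 2) ℂ) i)) =
        pauliChannel p ((1/2 : ℂ) • (1 : Matrix (Fin 2) (Fin 2) ℂ)) := by
      rw [Fin.sum_univ_two]
      simp only [Matrix.cons_val_zero, Matrix.cons_val_one, Matrix.head_cons]
      push_cast
      rw [← channel_linear, ← smul_add, hadd]
    have hherm : ((1/2 : ℂ) • (1 : Matrix (Fin 2) (Fin 2) ℂ)).IsHermitian := by
      show ((1/2 : ℂ) • (1 : Matrix (Fin 2) (Fin 2) ℂ))ᴴ = _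
      rw [Matrix.conjTranspose_smul, Matrix.conjTranspose_one]
      norm_num
    have htr1 : ((1/2 : ℂ) • (1 : Matrix (Fin 2) (Fin 2) ℂ)).trace = 1 := by
      rw [Matrix.trace_smul, Matrix.trace_one]
      norm_num
    have hdet : (pauliChannel p ((1/2 : ℂ) • (1 : Matrix (Fin 2) (Fin 2) ℂ))).det.re
        = (1 - (0:ℝ)^2)/4 := by
      have e00 : ((1/2 : ℂ) • (1 : Matrix (Fin 2) (Fin 2) ℂ)) 0 0 = 1/2 := by
        simp [Matrix.smul_apply, Matrix.one_apply]
      have e01 : ((1/2 : ℂ) • (1 : Matrix (Fin 2) (Fin 2) ℂ)) 0 1 = 0 := by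
        simp [Matrix.smul_apply, Matrix.one_apply]
      have e10 : ((1/2 : ℂ) • (1 : Matrix (Fin 2) (Fin 2) ℂ)) 1 0 = 0 := by
        simp [Matrix.smul_apply, Matrix.one_apply]
      have e11 : ((1/2 : ℂ) • (1 : Matrix (Fin 2) (Fin 2) ℂ)) 1 1 = 1/2 := by
        simp [Matrix.smul_apply, Matrix.one_apply]
      have hsum4 : p 0 + p 1 + p 2 + p 3 = 1 := by rw [← hsum, Fin.sum_univ_four]
      have hd : (pauliChannel p ((1/2 : ℂ) • (1 : Matrix (Fin 2) (Fin 2) ℂ))).det =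
          (((p 0 + p 1 + p 2 + p 3)^2/4 : ℝ) : ℂ) := by
        rw [channel_apply, Matrix.det_fin_two_of, e00, e01, e10, e11]
        push_cast
        ring
      rw [hd, Complex.ofReal_re, hsum4]
      norm_num
    have hvNmix : vN (pauliChannel p ((1/2 : ℂ) • (1 : Matrix (Fin 2) (Fin 2) ℂ))) = 1 := by
      have := vN_of_det (channel_herm hherm) (channel_trace hsum htr1) (le_refl (0:ℝ)) hdet
      rwa [show ((1:ℝ)+0)/2 = 1/2 by norm_num, binEnt_half] at this
    rw [hmix, hvNmix, Fin.sum_univ_two]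
    simp only [Matrix.cons_val_zero, Matrix.cons_val_one, Matrix.head_cons, hv, hv']
    ring

lemma holevo_ub (p : Fin 4 → ℝ) (hp : ∀ i, 0 ≤ p i) (hsum : ∑ i, p i = 1)
    (lam : ℝ) (hlam : IsGreatest {x : ℝ | ∃ i j : Fin 4, i ≠ j ∧ x = p i + p j} lam) :
    ∀ c ∈ { c : ℝ | ∃ (k : ℕ) (q : Fin k → ℝ) (ρs : Fin k → Matrix (Fin 2) (Fin 2) ℂ),
      (∀ i, 0 ≤ q i) ∧ (∑ i, q i = 1) ∧ (∀ i, IsDensity (ρs i)) ∧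
      c = vN (∑ i, (q i : ℂ) • pauliChannel p (ρs i))
          - ∑ i, q i * vN (pauliChannel p (ρs i)) }, c ≤ 1 - binEnt lam := by
  rintro c ⟨k, q, ρs, hq0, hq1, hdens, rfl⟩
  have hτpsd : (∑ i, (q i : ℂ) • pauliChannel p (ρs i)).PosSemidef := by
    refine Finset.sum_induction (fun i => (q i : ℂ) • pauliChannel p (ρs i))
      Matrix.PosSemidef (fun A B hA hB => hA.add hB) Matrix.PosSemidef.zero (fun i _ => ?_)
    exact psd_smul (channel_psd hp (hdens i).1) (hq0 i)
  have hτtr : (∑ i, (q i : ℂ) • pauliChannel p (ρs i)).trace = 1 := by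
    rw [Matrix.trace_sum]
    have : ∀ i, ((q i : ℂ) • pauliChannel p (ρs i)).trace = (q i : ℂ) := by
      intro i
      rw [Matrix.trace_smul, channel_trace hsum (hdens i).2, smul_eq_mul, mul_one]
    rw [Finset.sum_congr rfl fun i _ => this i, ← Complex.ofReal_sum, hq1, Complex.ofReal_one]
  have h1 : vN (∑ i, (q i : ℂ) • pauliChannel p (ρs i)) ≤ 1 := by
    obtain ⟨hvN, _⟩ := vN_two hτpsd.1 hτtr
    rw [hvN]
    exact binEnt_le_one _
  have h2 : binEnt lam ≤ ∑ i, q i * vN (pauliChannel p (ρs i)) := by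
    have hstep : ∀ i ∈ Finset.univ, q i * binEnt lam ≤ q i * vN (pauliChannel p (ρs i)) := by
      intro i _
      exact mul_le_mul_of_nonneg_left
        (vN_channel_ge p hp hsum lam hlam (ρs i) (hdens i).1 (hdens i).2) (hq0 i)
    calc binEnt lam = ∑ i, q i * binEnt lam := by rw [← Finset.sum_mul, hq1, one_mul]
      _ ≤ _ := Finset.sum_le_sum hstep
  linarith

end Holevo


def tensPow {A B : Type*} [Fintype A] [Fintype B]
    (ρ : Matrix (A × B) (A × B) ℂ) (n : ℕ) :
    Matrix ((Fin n → A) × (Fin n → B)) ((Fin n → A) × (Fin n → B)) ℂ :=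
  Matrix.of fun x y => ∏ t, ρ (x.1 t, x.2 t) (y.1 t, y.2 t)

/-- minimal output entropy of a Pauli channel is H(λ), where λ is the sum of
the two largest of p₀,…,p₃; consequently C₁(Λ) = 1 − min_ψ S(Λ(|ψ⟩⟨ψ|)) = 1 − H(1−λ). -/
theorem stmt17 (p : Fin 4 → ℝ) (hp : ∀ i, 0 ≤ p i) (hsum : ∑ i, p i = 1)
    (lam : ℝ) (hlam : IsGreatest {x : ℝ | ∃ i j : Fin 4, i ≠ j ∧ x = p i + p j} lam) :
    IsLeast {s : ℝ | ∃ ψ : Fin 2 → ℂ, (∑ x, ‖ψ x‖ ^ 2 = 1) ∧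
        s = vN (pauliChannel p (proj ψ))} (binEnt lam) ∧
    holevoCap (pauliChannel p) =
      1 - sInf {s : ℝ | ∃ ψ : Fin 2 → ℂ, (∑ x, ‖ψ x‖ ^ 2 = 1) ∧
        s = vN (pauliChannel p (proj ψ))} ∧
    holevoCap (pauliChannel p) = 1 - binEnt (1 - lam) := by
  have hleast : IsLeast {s : ℝ | ∃ ψ : Fin 2 → ℂ, (∑ x, ‖ψ x‖ ^ 2 = 1) ∧
      s = vN (pauliChannel p (proj ψ))} (binEnt lam) := by
    constructor
    · obtain ⟨φ, φ', hn, hn', hv, hv', hadd⟩ := good_pair p hp hsum lam hlam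
      exact ⟨φ, hn, hv.symm⟩
    · rintro s ⟨ψ, hn, rfl⟩
      exact vN_channel_ge p hp hsum lam hlam (proj ψ) (psd_proj ψ) (trace_proj ψ hn)
  have hcap : holevoCap (pauliChannel p) = 1 - binEnt lam := by
    apply IsGreatest.csSup_eq
    exact ⟨holevo_mem p hp hsum lam hlam, holevo_ub p hp hsum lam hlam⟩
  refine ⟨hleast, ?_, ?_⟩
  · rw [hleast.csInf_eq, hcap]
  · rw [hcap, binEnt_symm]

end QIT
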